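/- (Lemma 3: first-order identifiability with two words per document.) Let m = 2 and let θ ∈ Θ_{c_0} have pairwise distinct topic vectors θ_1,…,θ_K. Then 𝔡_{2,1}(θ) = 0 if and only if K ≥ 3. (In particular, for K = 2 and θ_1 ≠ θ_2 one has 𝔡_{2,1}(θ) > 0, while for every K ≥ 3 one has 𝔡_{2,1}(θ) = 0.) -/

import Mathlib

open MeasureTheory Filter

noncomputable section

namespace TopicModel

/-- The probability simplex in `ℝ^K`. -/
def simplex (K : ℕ) : Set (Fin K → ℝ) := {h | (∀ k, 0 ≤ h k) ∧ ∑ k, h k = 1}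

/-- The parameter set `Θ_{c₀}`: `K` topic vectors, each a probability vector on `[V]`
with all entries at least `c₀`. -/
def Theta (c0 : ℝ) (V K : ℕ) : Set (Fin K → Fin V → ℝ) :=
  {θ | (∀ k ℓ, c0 ≤ θ k ℓ) ∧ ∀ k, ∑ ℓ, θ k ℓ = 1}

/-- `θ` is a tuple of probability vectors. -/
def IsParam {V K : ℕ} (θ : Fin K → Fin V → ℝ) : Prop :=
  (∀ k ℓ, 0 ≤ θ k ℓ) ∧ ∀ k, ∑ ℓ, θ k ℓ = 1

/-- Word probability `p_{θ,h}(v) = Σ_k h_k θ_k(v)`. -/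
def pWord {V K : ℕ} (θ : Fin K → Fin V → ℝ) (h : Fin K → ℝ) (v : Fin V) : ℝ :=
  ∑ k, h k * θ k v

/-- Document probability given mixing vector `h`: `p_{θ,h}(x) = Π_i p_{θ,h}(x_i)`. -/
def pDoc {V K : ℕ} (m : ℕ) (θ : Fin K → Fin V → ℝ) (h : Fin K → ℝ)
    (x : Fin m → Fin V) : ℝ :=
  ∏ i, pWord θ h (x i)

/-- Marginal document probability `p_{θ,m}(x) = ∫ p_{θ,h}(x) dν₀(h)`. -/
def pM {V K : ℕ} (ν0 : Measure (Fin K → ℝ)) (m : ℕ) (θ : Fin K → Fin V → ℝ)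
    (x : Fin m → Fin V) : ℝ :=
  ∫ h, pDoc m θ h x ∂ν0

/-- `ℓ¹`-norm of a `K × V` array: `‖δ‖₁ = Σ_k Σ_ℓ |δ_k(ℓ)|`. -/
def norm1 {V K : ℕ} (δ : Fin K → Fin V → ℝ) : ℝ := ∑ k, ∑ ℓ, |δ k ℓ|

/-- Wasserstein distance between parameters:
`d_W(θ,θ') = min_π Σ_k ‖θ_k − θ'_{π(k)}‖₁`. -/
def dW {V K : ℕ} (θ θ' : Fin K → Fin V → ℝ) : ℝ :=
  ⨅ π : Equiv.Perm (Fin K), ∑ k, ∑ ℓ, |θ k ℓ - θ' (π k) ℓ|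

/-- `L¹` distance between the document pmfs of two parameters. -/
def distL1 {V K : ℕ} (ν0 : Measure (Fin K → ℝ)) (m : ℕ)
    (θ θ' : Fin K → Fin V → ℝ) : ℝ :=
  ∑ x : Fin m → Fin V, |pM ν0 m θ x - pM ν0 m θ' x|

/-- The `p`-th order degeneracy criterion `𝔡_{m,p}(θ)`: the infimum over all
`δ` with `‖δ‖₁ = 1` and `Σ_ℓ δ_k(ℓ) = 0` for every `k`, of
`Σ_{x ∈ [V]^m} |∫ p_{θ,h}(x) Σ_{i₁<⋯<i_p} Π_t (δ_h(x_{i_t}) / p_{θ,h}(x_{i_t})) dν₀|`. -/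
def degen {V K : ℕ} (ν0 : Measure (Fin K → ℝ)) (m : ℕ) (θ : Fin K → Fin V → ℝ)
    (p : ℕ) : ℝ :=
  sInf {r : ℝ | ∃ δ : Fin K → Fin V → ℝ, norm1 δ = 1 ∧ (∀ k, ∑ ℓ, δ k ℓ = 0) ∧
    r = ∑ x : Fin m → Fin V,
      |∫ h, pDoc m θ h x *
        ∑ S ∈ Finset.powersetCard p (Finset.univ : Finset (Fin m)),
          ∏ i ∈ S, ((∑ k, h k * δ k (x i)) / pWord θ h (x i)) ∂ν0|}

/-- The order of degeneracy `𝔭(m;θ) ∈ ℕ ∪ {∞}`: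
the least `p ∈ {1,…,m}` with `𝔡_{m,p}(θ) > 0`, or `∞` if none exists. -/
def pOrder {V K : ℕ} (ν0 : Measure (Fin K → ℝ)) (m : ℕ) (θ : Fin K → Fin V → ℝ) : ℕ∞ :=
  sInf ((↑) '' {p : ℕ | 1 ≤ p ∧ p ≤ m ∧ 0 < degen ν0 m θ p})

/-- Assumption (A2) on the mixing measure `ν₀`: a Borel probability measure supported on the
simplex, exchangeable, with `E[h₁²] > E[h₁h₂]` and (when `K ≥ 3`)
`E[h₁³] + 2E[h₁h₂h₃] > 3E[h₁²h₂]`. -/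
structure NiceMixing (K : ℕ) (ν0 : Measure (Fin K → ℝ)) : Prop where
  prob : IsProbabilityMeasure ν0
  support : ν0 (simplex K)ᶜ = 0
  exch : ∀ π : Equiv.Perm (Fin K), Measure.map (fun h => h ∘ π) ν0 = ν0
  mom2 : ∀ i j : Fin K, i ≠ j → ∫ h, h i * h j ∂ν0 < ∫ h, h i ^ 2 ∂ν0
  mom3 : ∀ i j k : Fin K, i ≠ j → j ≠ k → i ≠ k →
    3 * ∫ h, h i ^ 2 * h j ∂ν0 < ∫ h, h i ^ 3 ∂ν0 + 2 * ∫ h, h i * h j * h k ∂ν0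

/-- The equivalence class `Θ̃_{c₀}(θ)` of parameters inducing the same document pmf as `θ`. -/
def equivClass {V K : ℕ} (ν0 : Measure (Fin K → ℝ)) (m : ℕ) (c0 : ℝ)
    (θ : Fin K → Fin V → ℝ) : Set (Fin K → Fin V → ℝ) :=
  {θ' | θ' ∈ Theta c0 V K ∧ ∀ x : Fin m → Fin V, pM ν0 m θ' x = pM ν0 m θ x}

/-- Probability of the event `A` under `n` i.i.d. draws from the pmf `p` on a finite set. -/
def prodProb {α : Type*} [Fintype α] (p : α → ℝ) (n : ℕ) (A : Set (Fin n → α)) : ℝ :=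
  ∑ xs : Fin n → α, A.indicator (fun ys => ∏ i, p (ys i)) xs

end TopicModel

namespace TopicModel

section Lemma3Aux

variable {V K : ℕ}

lemma ae_mem_simplex {ν0 : Measure (Fin K → ℝ)} (hν0 : NiceMixing K ν0) :
    ∀ᵐ h ∂ν0, h ∈ simplex K := by
  rw [MeasureTheory.ae_iff]
  simpa [Set.compl_def] using hν0.support

lemma integrable_hh {ν0 : Measure (Fin K → ℝ)} (hν0 : NiceMixing K ν0) (k j : Fin K) :
    Integrable (fun h => h k * h j) ν0 := by
  haveI := hν0.prob
  refine (integrable_const (1:ℝ)).mono'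
    ((measurable_pi_apply k).mul (measurable_pi_apply j)).aestronglyMeasurable ?_
  filter_upwards [ae_mem_simplex hν0] with h hh
  obtain ⟨hpos, hsum⟩ := hh
  have hle : ∀ i : Fin K, h i ≤ 1 := fun i => by
    calc h i ≤ ∑ l, h l := Finset.single_le_sum (fun l _ => hpos l) (Finset.mem_univ i)
    _ = 1 := hsum
  have h1 : |h k * h j| ≤ 1 := by
    rw [abs_mul, abs_of_nonneg (hpos k), abs_of_nonneg (hpos j)]
    calc h k * h j ≤ 1 * 1 := mul_le_mul (hle k) (hle j) (hpos j) zero_le_one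
    _ = 1 := one_mul 1
  rw [Real.norm_eq_abs]; exact h1

/-- second moments -/
def Mm (ν0 : Measure (Fin K → ℝ)) (k j : Fin K) : ℝ := ∫ h, h k * h j ∂ν0

lemma Mm_perm {ν0 : Measure (Fin K → ℝ)} (hν0 : NiceMixing K ν0) (π : Equiv.Perm (Fin K))
    (k j : Fin K) : Mm ν0 k j = Mm ν0 (π k) (π j) := by
  have hg : Measurable (fun h : Fin K → ℝ => h ∘ π) :=
    measurable_pi_lambda _ fun i => measurable_pi_apply (π i)
  calc Mm ν0 k j
      = ∫ h, h k * h j ∂(Measure.map (fun h : Fin K → ℝ => h ∘ π) ν0) := by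
        rw [hν0.exch π]; rfl
    _ = ∫ h, (h ∘ π) k * (h ∘ π) j ∂ν0 := by
        refine integral_map (measurable_pi_lambda _ fun i => measurable_pi_apply (π i)).aemeasurable
          ((measurable_pi_apply k).mul (measurable_pi_apply j)).aestronglyMeasurable
    _ = Mm ν0 (π k) (π j) := by simp [Mm, Function.comp]

lemma Mm_diag {ν0 : Measure (Fin K → ℝ)} (hν0 : NiceMixing K ν0) (k l : Fin K) :
    Mm ν0 k k = Mm ν0 l l := by
  simpa [Equiv.swap_apply_left] using Mm_perm hν0 (Equiv.swap k l) k k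

lemma Mm_off {ν0 : Measure (Fin K → ℝ)} (hν0 : NiceMixing K ν0) {k j k' j' : Fin K}
    (h1 : k ≠ j) (h2 : k' ≠ j') : Mm ν0 k j = Mm ν0 k' j' := by
  set σ := Equiv.swap k k' with hσ
  have hσj : σ j ≠ k' := by
    intro hc
    apply h1
    have : σ j = σ k := by rw [hc, Equiv.swap_apply_left]
    exact (σ.injective this).symm
  set τ := Equiv.swap (σ j) j' with hτ
  have hπ := Mm_perm hν0 (σ.trans τ) k j
  rw [hπ]
  have e1 : (σ.trans τ) k = k' := by
    simp only [Equiv.trans_apply, hσ, Equiv.swap_apply_left]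
    exact Equiv.swap_apply_of_ne_of_ne (Ne.symm hσj) h2
  have e2 : (σ.trans τ) j = j' := by
    simp only [Equiv.trans_apply, hτ, Equiv.swap_apply_left]
  rw [e1, e2]


/-- the inner expression (value of the defining integral of `𝔡_{2,1}`). -/
def innerExpr (ν0 : Measure (Fin K → ℝ)) (θ δ : Fin K → Fin V → ℝ) (v w : Fin V) : ℝ :=
  ∑ k, ∑ j, Mm ν0 k j * (δ k v * θ j w + θ j v * δ k w)

lemma integralA {c0 : ℝ} (hc0 : 0 < c0) {ν0 : Measure (Fin K → ℝ)} (hν0 : NiceMixing K ν0)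
    {θ : Fin K → Fin V → ℝ} (hθ : θ ∈ Theta c0 V K)
    (δ : Fin K → Fin V → ℝ) (x : Fin 2 → Fin V) :
    (∫ h, pDoc 2 θ h x *
        ∑ S ∈ Finset.powersetCard 1 (Finset.univ : Finset (Fin 2)),
          ∏ i ∈ S, ((∑ k, h k * δ k (x i)) / pWord θ h (x i)) ∂ν0)
    = innerExpr ν0 θ δ (x 0) (x 1) := by
  haveI := hν0.prob
  have hpw : ∀ h ∈ simplex K, ∀ v, c0 ≤ pWord θ h v := by
    intro h hh v
    obtain ⟨hpos, hsum⟩ := hh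
    calc c0 = ∑ k, h k * c0 := by rw [← Finset.sum_mul, hsum, one_mul]
    _ ≤ ∑ k, h k * θ k v :=
        Finset.sum_le_sum fun k _ => mul_le_mul_of_nonneg_left (hθ.1 k v) (hpos k)
  have hset : Finset.powersetCard 1 (Finset.univ : Finset (Fin 2))
      = {{0},{1}} := by decide
  have hpt : ∀ h ∈ simplex K,
      pDoc 2 θ h x * (∑ S ∈ Finset.powersetCard 1 (Finset.univ : Finset (Fin 2)),
          ∏ i ∈ S, ((∑ k, h k * δ k (x i)) / pWord θ h (x i)))
      = ∑ k, ∑ j, (h k * h j) * (δ k (x 0) * θ j (x 1) + θ j (x 0) * δ k (x 1)) := by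
    intro h hh
    have h0 : (0:ℝ) < pWord θ h (x 0) := lt_of_lt_of_le hc0 (hpw h hh _)
    have h1 : (0:ℝ) < pWord θ h (x 1) := lt_of_lt_of_le hc0 (hpw h hh _)
    rw [hset, Finset.sum_insert (by decide), Finset.sum_singleton,
      Finset.prod_singleton, Finset.prod_singleton]
    have hdoc : pDoc 2 θ h x = pWord θ h (x 0) * pWord θ h (x 1) := by
      rw [pDoc, Fin.prod_univ_two]
    rw [hdoc]
    have e0 : pWord θ h (x 0) * pWord θ h (x 1) *
        ((∑ k, h k * δ k (x 0)) / pWord θ h (x 0)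
          + (∑ k, h k * δ k (x 1)) / pWord θ h (x 1))
        = (∑ k, h k * δ k (x 0)) * pWord θ h (x 1)
          + pWord θ h (x 0) * (∑ k, h k * δ k (x 1)) := by
      field_simp
    rw [e0]
    have e1 : (∑ k, h k * δ k (x 0)) * pWord θ h (x 1)
        = ∑ k, ∑ j, (h k * δ k (x 0)) * (h j * θ j (x 1)) := by
      rw [pWord]; exact Finset.sum_mul_sum _ _ _ _
    have e2 : pWord θ h (x 0) * (∑ k, h k * δ k (x 1))
        = ∑ k, ∑ j, (h j * θ j (x 0)) * (h k * δ k (x 1)) := by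
      rw [pWord, Finset.sum_mul_sum]; exact Finset.sum_comm
    rw [e1, e2, ← Finset.sum_add_distrib]
    refine Finset.sum_congr rfl fun k _ => ?_
    rw [← Finset.sum_add_distrib]
    exact Finset.sum_congr rfl fun j _ => by ring
  have hae : (fun h => pDoc 2 θ h x *
        ∑ S ∈ Finset.powersetCard 1 (Finset.univ : Finset (Fin 2)),
          ∏ i ∈ S, ((∑ k, h k * δ k (x i)) / pWord θ h (x i)))
      =ᵐ[ν0] fun h => ∑ k, ∑ j, (h k * h j)
          * (δ k (x 0) * θ j (x 1) + θ j (x 0) * δ k (x 1)) := by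
    filter_upwards [ae_mem_simplex hν0] with h hh using hpt h hh
  rw [integral_congr_ae hae]
  have hint : ∀ k j : Fin K, Integrable (fun h : Fin K → ℝ =>
      (h k * h j) * (δ k (x 0) * θ j (x 1) + θ j (x 0) * δ k (x 1))) ν0 :=
    fun k j => (integrable_hh hν0 k j).mul_const _
  rw [integral_finset_sum _ fun k _ =>
    integrable_finset_sum _ fun j _ => hint k j]
  refine Finset.sum_congr rfl fun k _ => ?_
  rw [integral_finset_sum _ fun j _ => hint k j]
  refine Finset.sum_congr rfl fun j _ => ?_
  exact integral_mul_const _ _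


lemma innerExpr_formula {ν0 : Measure (Fin K → ℝ)} (θ δ : Fin K → Fin V → ℝ) (v w : Fin V)
    {a b : ℝ} (ha : ∀ k, Mm ν0 k k = a) (hb : ∀ k j : Fin K, k ≠ j → Mm ν0 k j = b) :
    innerExpr ν0 θ δ v w
      = b * ((∑ k, δ k v) * (∑ k, θ k w) + (∑ k, θ k v) * (∑ k, δ k w))
        + (a - b) * (∑ k, (δ k v * θ k w + θ k v * δ k w)) := by
  have hsplit : ∑ k, ∑ j, (δ k v * θ j w + θ j v * δ k w)
      = (∑ k, δ k v) * (∑ k, θ k w) + (∑ k, θ k v) * (∑ k, δ k w) := by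
    have e1 : (∑ k, δ k v) * (∑ j, θ j w) = ∑ k, ∑ j, δ k v * θ j w :=
      Finset.sum_mul_sum _ _ _ _
    have e2 : (∑ j, θ j v) * (∑ k, δ k w) = ∑ k, ∑ j, θ j v * δ k w := by
      rw [Finset.sum_mul_sum]; exact Finset.sum_comm
    rw [e1, e2, ← Finset.sum_add_distrib]
    exact Finset.sum_congr rfl fun k _ => Finset.sum_add_distrib
  calc innerExpr ν0 θ δ v w
      = ∑ k, ∑ j, (b * (δ k v * θ j w + θ j v * δ k w)
          + (if j = k then (a - b) * (δ k v * θ j w + θ j v * δ k w) else 0)) := by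
        refine Finset.sum_congr rfl fun k _ => Finset.sum_congr rfl fun j _ => ?_
        by_cases hjk : j = k
        · subst hjk; rw [ha j]; simp; ring
        · rw [hb k j (Ne.symm hjk)]; simp [hjk]
    _ = (∑ k, ∑ j, b * (δ k v * θ j w + θ j v * δ k w))
        + ∑ k, (a - b) * (δ k v * θ k w + θ k v * δ k w) := by
        rw [← Finset.sum_add_distrib]
        refine Finset.sum_congr rfl fun k _ => ?_
        rw [Finset.sum_add_distrib, Finset.sum_ite_eq' Finset.univ k
          (fun j => (a - b) * (δ k v * θ j w + θ j v * δ k w))]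
        simp
    _ = b * ((∑ k, δ k v) * (∑ k, θ k w) + (∑ k, θ k v) * (∑ k, δ k w))
        + (a - b) * (∑ k, (δ k v * θ k w + θ k v * δ k w)) := by
        rw [← hsplit]
        simp only [Finset.mul_sum]

lemma norm1_smul (c : ℝ) (δ : Fin K → Fin V → ℝ) : norm1 (c • δ) = |c| * norm1 δ := by
  simp [norm1, Finset.mul_sum, abs_mul]

lemma norm1_pos {δ : Fin K → Fin V → ℝ} {k : Fin K} {v : Fin V} (h : δ k v ≠ 0) :
    0 < norm1 δ := by
  rw [norm1]
  have h1 : 0 < ∑ ℓ, |δ k ℓ| :=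
    Finset.sum_pos' (fun ℓ _ => abs_nonneg _) ⟨v, Finset.mem_univ v, abs_pos.2 h⟩
  exact lt_of_lt_of_le h1 (Finset.single_le_sum (f := fun i => ∑ ℓ, |δ i ℓ|)
    (fun i _ => Finset.sum_nonneg fun _ _ => abs_nonneg _) (Finset.mem_univ k))

lemma abs_le_norm1 (δ : Fin K → Fin V → ℝ) (k : Fin K) (v : Fin V) :
    |δ k v| ≤ norm1 δ := by
  rw [norm1]
  calc |δ k v| ≤ ∑ ℓ, |δ k ℓ| :=
      Finset.single_le_sum (f := fun ℓ => |δ k ℓ|) (fun ℓ _ => abs_nonneg _) (Finset.mem_univ v)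
  _ ≤ ∑ k, ∑ ℓ, |δ k ℓ| := Finset.single_le_sum (f := fun i => ∑ ℓ, |δ i ℓ|)
      (fun i _ => Finset.sum_nonneg fun _ _ => abs_nonneg _) (Finset.mem_univ k)


lemma sum_indicator_mul (i : Fin K) (f : Fin K → ℝ) :
    ∑ k, (if k = i then (1:ℝ) else 0) * f k = f i := by
  simp only [ite_mul, one_mul, zero_mul]
  rw [Finset.sum_ite_eq' Finset.univ i f]
  simp

lemma exists_moments {ν0 : Measure (Fin K → ℝ)} (hν0 : NiceMixing K ν0) (hK : 2 ≤ K) :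
    ∃ a b : ℝ, (∀ k, Mm ν0 k k = a) ∧ (∀ k j : Fin K, k ≠ j → Mm ν0 k j = b)
      ∧ b < a ∧ 0 ≤ b := by
  have h0 : (0:ℕ) < K := by omega
  have h1 : (1:ℕ) < K := by omega
  set i0 : Fin K := ⟨0, h0⟩ with hi0
  set i1 : Fin K := ⟨1, h1⟩ with hi1
  have hi01 : i0 ≠ i1 := by simp [hi0, hi1, Fin.ext_iff]
  refine ⟨Mm ν0 i0 i0, Mm ν0 i0 i1, fun k => Mm_diag hν0 k i0,
    fun k j hkj => Mm_off hν0 hkj hi01, ?_, ?_⟩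
  · have h2 := hν0.mom2 i0 i1 hi01
    have e : (∫ h, h i0 ^ 2 ∂ν0) = Mm ν0 i0 i0 := by
      unfold Mm; simp_rw [pow_two]
    rw [e] at h2
    exact h2
  · unfold Mm
    apply integral_nonneg_of_ae
    filter_upwards [ae_mem_simplex hν0] with h hh
    exact mul_nonneg (hh.1 i0) (hh.1 i1)

lemma degen_eq_sInf {c0 : ℝ} (hc0 : 0 < c0) {ν0 : Measure (Fin K → ℝ)}
    (hν0 : NiceMixing K ν0) {θ : Fin K → Fin V → ℝ} (hθ : θ ∈ Theta c0 V K) :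
    degen ν0 2 θ 1 = sInf ((fun δ => ∑ x : Fin 2 → Fin V, |innerExpr ν0 θ δ (x 0) (x 1)|)
      '' {δ : Fin K → Fin V → ℝ | norm1 δ = 1 ∧ ∀ k, ∑ ℓ, δ k ℓ = 0}) := by
  unfold degen
  congr 1
  ext r
  constructor
  · rintro ⟨δ, h1, h2, rfl⟩
    refine ⟨δ, ⟨h1, h2⟩, (Finset.sum_congr rfl fun x _ => ?_).symm⟩
    rw [integralA hc0 hν0 hθ δ x]
  · rintro ⟨δ, ⟨h1, h2⟩, rfl⟩
    refine ⟨δ, h1, h2, Finset.sum_congr rfl fun x _ => ?_⟩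
    rw [integralA hc0 hν0 hθ δ x]

lemma degen_zero_of_K3 {c0 : ℝ} (hc0 : 0 < c0) (hK3 : 3 ≤ K)
    {ν0 : Measure (Fin K → ℝ)} (hν0 : NiceMixing K ν0)
    {θ : Fin K → Fin V → ℝ} (hθ : θ ∈ Theta c0 V K)
    (hdist : Function.Injective θ) : degen ν0 2 θ 1 = 0 := by
  obtain ⟨a, b, ha, hb, hba, hbnn⟩ := exists_moments hν0 (by omega)
  have h0 : (0:ℕ) < K := by omega
  have h1 : (1:ℕ) < K := by omega
  have h2 : (2:ℕ) < K := by omega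
  set i0 : Fin K := ⟨0, h0⟩ with hi0
  set i1 : Fin K := ⟨1, h1⟩ with hi1
  set i2 : Fin K := ⟨2, h2⟩ with hi2
  have hi01 : i0 ≠ i1 := by simp [hi0, hi1, Fin.ext_iff]
  have hi02 : i0 ≠ i2 := by simp [hi0, hi2, Fin.ext_iff]
  have hi12 : i1 ≠ i2 := by simp [hi1, hi2, Fin.ext_iff]
  set u : Fin K → ℝ := fun k => (if k = i0 then (1:ℝ) else 0) - (if k = i1 then 1 else 0)
    with hudef
  set wv : Fin K → ℝ := fun k => (if k = i1 then (1:ℝ) else 0) - (if k = i2 then 1 else 0)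
    with hwdef
  set A : Fin V → ℝ := fun v => ∑ j, wv j * θ j v with hAdef
  set B : Fin V → ℝ := fun v => ∑ j, u j * θ j v with hBdef
  set δr : Fin K → Fin V → ℝ := fun k v => u k * A v - wv k * B v with hδrdef
  have hu0 : ∑ k, u k = 0 := by
    simp only [hudef]
    rw [Finset.sum_sub_distrib, Finset.sum_ite_eq' Finset.univ i0 (fun _ => (1:ℝ)),
      Finset.sum_ite_eq' Finset.univ i1 (fun _ => (1:ℝ))]
    simp
  have hw0 : ∑ k, wv k = 0 := by
    simp only [hwdef]
    rw [Finset.sum_sub_distrib, Finset.sum_ite_eq' Finset.univ i1 (fun _ => (1:ℝ)),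
      Finset.sum_ite_eq' Finset.univ i2 (fun _ => (1:ℝ))]
    simp
  have hAv : ∀ v, A v = θ i1 v - θ i2 v := by
    intro v
    simp only [hAdef]
    have e : ∀ k : Fin K, wv k * θ k v
        = (if k = i1 then (1:ℝ) else 0) * θ k v - (if k = i2 then (1:ℝ) else 0) * θ k v := by
      intro k; rw [hwdef]; ring
    rw [Finset.sum_congr rfl fun k _ => e k, Finset.sum_sub_distrib,
      sum_indicator_mul, sum_indicator_mul]
  have hBv : ∀ v, B v = θ i0 v - θ i1 v := by
    intro v
    simp only [hBdef]
    have e : ∀ k : Fin K, u k * θ k v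
        = (if k = i0 then (1:ℝ) else 0) * θ k v - (if k = i1 then (1:ℝ) else 0) * θ k v := by
      intro k; rw [hudef]; ring
    rw [Finset.sum_congr rfl fun k _ => e k, Finset.sum_sub_distrib,
      sum_indicator_mul, sum_indicator_mul]
  -- row sums of δr vanish
  have hArow : ∑ v, A v = 0 := by
    have e : ∀ v, A v = θ i1 v - θ i2 v := hAv
    rw [Finset.sum_congr rfl fun v _ => e v, Finset.sum_sub_distrib, hθ.2 i1, hθ.2 i2]
    ring
  have hBrow : ∑ v, B v = 0 := by
    rw [Finset.sum_congr rfl fun v _ => hBv v, Finset.sum_sub_distrib, hθ.2 i0, hθ.2 i1]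
    ring
  have hrow : ∀ k, ∑ v, δr k v = 0 := by
    intro k
    simp only [hδrdef]
    rw [Finset.sum_sub_distrib, ← Finset.mul_sum, ← Finset.mul_sum, hArow, hBrow]
    ring
  have hD : ∀ v, ∑ k, δr k v = 0 := by
    intro v
    simp only [hδrdef]
    rw [Finset.sum_sub_distrib, ← Finset.sum_mul, ← Finset.sum_mul, hu0, hw0]
    ring
  have hS : ∀ v w, ∑ k, (δr k v * θ k w + θ k v * δr k w) = 0 := by
    intro v w
    have e : ∀ k : Fin K, δr k v * θ k w + θ k v * δr k w
        = A v * (u k * θ k w) - B v * (wv k * θ k w)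
          + (A w * (u k * θ k v) - B w * (wv k * θ k v)) := by
      intro k; simp only [hδrdef]; ring
    rw [Finset.sum_congr rfl fun k _ => e k, Finset.sum_add_distrib,
      Finset.sum_sub_distrib, Finset.sum_sub_distrib,
      ← Finset.mul_sum, ← Finset.mul_sum, ← Finset.mul_sum, ← Finset.mul_sum]
    have hBs : ∀ vv, ∑ k, u k * θ k vv = B vv := fun vv => (hBdef ▸ rfl)
    have hAs : ∀ vv, ∑ k, wv k * θ k vv = A vv := fun vv => (hAdef ▸ rfl)
    rw [hBs w, hAs w, hBs v, hAs v]
    ring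
  -- δr is nonzero
  have hui0 : u i0 = 1 := by simp [hudef, hi01]
  have hwi0 : wv i0 = 0 := by simp [hwdef, hi01, hi02]
  obtain ⟨v0, hv0⟩ := Function.ne_iff.mp (hdist.ne hi12)
  have hδri0 : δr i0 v0 = θ i1 v0 - θ i2 v0 := by
    simp only [hδrdef, hui0, hwi0]
    rw [hAv v0]; ring
  have hn : 0 < norm1 δr := norm1_pos (k := i0) (v := v0)
    (by rw [hδri0]; exact sub_ne_zero.2 hv0)
  set δs : Fin K → Fin V → ℝ := (norm1 δr)⁻¹ • δr with hδsdef
  have hδsapp : ∀ k v, δs k v = (norm1 δr)⁻¹ * δr k v := by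
    intro k v; rw [hδsdef]; simp
  have hδsn : norm1 δs = 1 := by
    rw [hδsdef, norm1_smul, abs_of_pos (by positivity), inv_mul_cancel₀ hn.ne']
  have hδsrow : ∀ k, ∑ ℓ, δs k ℓ = 0 := by
    intro k
    rw [Finset.sum_congr rfl fun ℓ _ => hδsapp k ℓ, ← Finset.mul_sum, hrow k, mul_zero]
  have hinner : ∀ v w : Fin V, innerExpr ν0 θ δs v w = 0 := by
    intro v w
    rw [innerExpr_formula θ δs v w ha hb]
    have hDs : ∀ vv, ∑ k, δs k vv = 0 := by
      intro vv
      rw [Finset.sum_congr rfl fun k _ => hδsapp k vv, ← Finset.mul_sum, hD vv, mul_zero]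
    have hSs : ∑ k, (δs k v * θ k w + θ k v * δs k w) = 0 := by
      have e : ∀ k : Fin K, δs k v * θ k w + θ k v * δs k w
          = (norm1 δr)⁻¹ * (δr k v * θ k w + θ k v * δr k w) := by
        intro k; rw [hδsapp k v, hδsapp k w]; ring
      rw [Finset.sum_congr rfl fun k _ => e k, ← Finset.mul_sum, hS v w, mul_zero]
    rw [hDs v, hDs w, hSs]
    ring
  rw [degen_eq_sInf hc0 hν0 hθ]
  have h0mem : (0:ℝ) ∈ (fun δ => ∑ x : Fin 2 → Fin V, |innerExpr ν0 θ δ (x 0) (x 1)|)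
      '' {δ : Fin K → Fin V → ℝ | norm1 δ = 1 ∧ ∀ k, ∑ ℓ, δ k ℓ = 0} := by
    refine ⟨δs, ⟨hδsn, hδsrow⟩, ?_⟩
    exact Finset.sum_eq_zero fun x _ => by rw [hinner (x 0) (x 1), abs_zero]
  have hlb : ∀ r ∈ (fun δ => ∑ x : Fin 2 → Fin V, |innerExpr ν0 θ δ (x 0) (x 1)|)
      '' {δ : Fin K → Fin V → ℝ | norm1 δ = 1 ∧ ∀ k, ∑ ℓ, δ k ℓ = 0}, (0:ℝ) ≤ r := by
    rintro r ⟨δ, -, rfl⟩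
    exact Finset.sum_nonneg fun _ _ => abs_nonneg _
  exact le_antisymm (csInf_le ⟨0, hlb⟩ h0mem) (le_csInf ⟨0, h0mem⟩ hlb)


lemma degen_ne_zero_K2 (hV : 2 ≤ V) {c0 : ℝ} (hc0 : 0 < c0)
    {ν0 : Measure (Fin 2 → ℝ)} (hν0 : NiceMixing 2 ν0)
    {θ : Fin 2 → Fin V → ℝ} (hθ : θ ∈ Theta c0 V 2)
    (hdist : Function.Injective θ) : degen ν0 2 θ 1 ≠ 0 := by
  intro hzero
  obtain ⟨a, b, ha, hb, hba, hbnn⟩ := exists_moments hν0 (le_refl 2)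
  set C : Set (Fin 2 → Fin V → ℝ) := {δ | norm1 δ = 1 ∧ ∀ k, ∑ ℓ, δ k ℓ = 0} with hCdef
  set g : (Fin 2 → Fin V → ℝ) → ℝ :=
    fun δ => ∑ x : Fin 2 → Fin V, |innerExpr ν0 θ δ (x 0) (x 1)| with hgdef
  -- C is nonempty
  have hV0 : (0:ℕ) < V := by omega
  have hV1 : (1:ℕ) < V := by omega
  set j0 : Fin V := ⟨0, hV0⟩ with hj0
  set j1 : Fin V := ⟨1, hV1⟩ with hj1
  have hj01 : j0 ≠ j1 := by simp [hj0, hj1, Fin.ext_iff]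
  set δe : Fin 2 → Fin V → ℝ := fun k ℓ =>
    (if k = (0 : Fin 2) then (1:ℝ) else 0)
      * ((if ℓ = j0 then (1:ℝ) else 0) - (if ℓ = j1 then 1 else 0)) with hδedef
  have hδerow : ∀ k, ∑ ℓ, δe k ℓ = 0 := by
    intro k
    simp only [hδedef]
    rw [← Finset.mul_sum, Finset.sum_sub_distrib,
      Finset.sum_ite_eq' Finset.univ j0 (fun _ => (1:ℝ)),
      Finset.sum_ite_eq' Finset.univ j1 (fun _ => (1:ℝ))]
    simp
  have hδe00 : δe 0 j0 = 1 := by simp [hδedef, hj01]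
  have hne : (0:ℝ) < norm1 δe := norm1_pos (k := 0) (v := j0) (by rw [hδe00]; norm_num)
  have hδcC : (norm1 δe)⁻¹ • δe ∈ C := by
    constructor
    · rw [norm1_smul, abs_of_pos (by positivity), inv_mul_cancel₀ hne.ne']
    · intro k
      have : ∀ ℓ, ((norm1 δe)⁻¹ • δe) k ℓ = (norm1 δe)⁻¹ * δe k ℓ := fun ℓ => by simp
      rw [Finset.sum_congr rfl fun ℓ _ => this ℓ, ← Finset.mul_sum, hδerow k, mul_zero]
  have hCne : C.Nonempty := ⟨_, hδcC⟩
  -- compactness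
  have hCclosed : IsClosed C := by
    rw [hCdef]
    have hncont : Continuous (norm1 : (Fin 2 → Fin V → ℝ) → ℝ) := by
      unfold norm1
      exact continuous_finset_sum _ fun k _ => continuous_finset_sum _ fun ℓ _ =>
        ((continuous_apply ℓ).comp (continuous_apply k)).abs
    have hcl1 : IsClosed {δ : Fin 2 → Fin V → ℝ | norm1 δ = 1} :=
      isClosed_eq hncont continuous_const
    have hcl2 : IsClosed {δ : Fin 2 → Fin V → ℝ | ∀ k, ∑ ℓ, δ k ℓ = 0} := by
      have he : {δ : Fin 2 → Fin V → ℝ | ∀ k, ∑ ℓ, δ k ℓ = 0}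
          = ⋂ k, {δ : Fin 2 → Fin V → ℝ | ∑ ℓ, δ k ℓ = 0} := by
        ext δ; simp
      rw [he]
      exact isClosed_iInter fun k => isClosed_eq
        (continuous_finset_sum _ fun ℓ _ => (continuous_apply ℓ).comp (continuous_apply k))
        continuous_const
    exact hcl1.inter hcl2
  have hCsub : C ⊆ Metric.closedBall 0 1 := by
    intro δ hδ
    rw [Metric.mem_closedBall, dist_zero_right]
    rw [pi_norm_le_iff_of_nonneg zero_le_one]
    intro k
    rw [pi_norm_le_iff_of_nonneg zero_le_one]
    intro ℓ
    rw [Real.norm_eq_abs]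
    calc |δ k ℓ| ≤ norm1 δ := abs_le_norm1 δ k ℓ
    _ = 1 := hδ.1
  have hCcomp : IsCompact C :=
    IsCompact.of_isClosed_subset (isCompact_closedBall 0 1) hCclosed hCsub
  have hgcont : Continuous g := by
    rw [hgdef]
    refine continuous_finset_sum _ fun x _ => Continuous.abs ?_
    unfold innerExpr
    refine continuous_finset_sum _ fun k _ => continuous_finset_sum _ fun j _ => ?_
    fun_prop
  -- the infimum is attained
  have hmem : sInf (g '' C) ∈ g '' C := (hCcomp.image hgcont).sInf_mem (hCne.image g)
  rw [degen_eq_sInf hc0 hν0 hθ] at hzero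
  rw [← hgdef, ← hCdef] at hzero
  rw [hzero] at hmem
  obtain ⟨δ0, hδ0C, hgδ0⟩ := hmem
  obtain ⟨hδ0n, hδ0r⟩ := hδ0C
  -- every inner expression vanishes
  simp only [hgdef] at hgδ0
  have habs := (Finset.sum_eq_zero_iff_of_nonneg (fun x _ => abs_nonneg _)).mp hgδ0
  have hinner0 : ∀ v w : Fin V, innerExpr ν0 θ δ0 v w = 0 := by
    intro v w
    have h1 := habs ![v, w] (Finset.mem_univ _)
    simpa using h1
  have hform : ∀ v w : Fin V,
      b * ((∑ k, δ0 k v) * (∑ k, θ k w) + (∑ k, θ k v) * (∑ k, δ0 k w))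
        + (a - b) * (∑ k, (δ0 k v * θ k w + θ k v * δ0 k w)) = 0 := by
    intro v w
    rw [← innerExpr_formula θ δ0 v w ha hb]
    exact hinner0 v w
  -- summing over w kills everything except (a+b) * D v
  have hTs : ∑ w : Fin V, ∑ k : Fin 2, θ k w = 2 := by
    rw [Finset.sum_comm, Finset.sum_congr rfl fun k _ => hθ.2 k]
    simp
  have hDs : ∑ w : Fin V, ∑ k : Fin 2, δ0 k w = 0 := by
    rw [Finset.sum_comm, Finset.sum_congr rfl fun k _ => hδ0r k]
    simp
  have hSw : ∀ v, ∑ w, ∑ k : Fin 2, (δ0 k v * θ k w + θ k v * δ0 k w) = ∑ k, δ0 k v := by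
    intro v
    rw [Finset.sum_comm]
    refine Finset.sum_congr rfl fun k _ => ?_
    rw [Finset.sum_add_distrib, ← Finset.mul_sum, ← Finset.mul_sum, hθ.2 k, hδ0r k]
    ring
  have hD0 : ∀ v, ∑ k : Fin 2, δ0 k v = 0 := by
    intro v
    have hsum0 : ∑ w, (b * ((∑ k, δ0 k v) * (∑ k, θ k w) + (∑ k, θ k v) * (∑ k, δ0 k w))
        + (a - b) * (∑ k : Fin 2, (δ0 k v * θ k w + θ k v * δ0 k w))) = 0 :=
      Finset.sum_eq_zero fun w _ => hform v w
    rw [Finset.sum_add_distrib, ← Finset.mul_sum, ← Finset.mul_sum, hSw v,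
      Finset.sum_add_distrib, ← Finset.mul_sum, ← Finset.mul_sum, hTs, hDs] at hsum0
    have hD : (a + b) * (∑ k : Fin 2, δ0 k v) = 0 := by linear_combination hsum0
    have hpos : (0:ℝ) < a + b := by linarith
    exact (mul_eq_zero.mp hD).resolve_left hpos.ne'
  have hd1 : ∀ v, δ0 1 v = - δ0 0 v := by
    intro v
    have := hD0 v
    rw [Fin.sum_univ_two] at this
    linarith
  have hS : ∀ v w, δ0 0 v * (θ 0 w - θ 1 w) + δ0 0 w * (θ 0 v - θ 1 v) = 0 := by
    intro v w
    have h1 := hform v w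
    rw [hD0 v, hD0 w] at h1
    have h2 : (a - b) * (∑ k : Fin 2, (δ0 k v * θ k w + θ k v * δ0 k w)) = 0 := by
      linear_combination h1
    have hab : a - b ≠ 0 := sub_ne_zero.2 hba.ne'
    have h3 : ∑ k : Fin 2, (δ0 k v * θ k w + θ k v * δ0 k w) = 0 :=
      (mul_eq_zero.mp h2).resolve_left hab
    rw [Fin.sum_univ_two] at h3
    have e1 := hd1 v
    have e2 := hd1 w
    linear_combination h3 - θ 1 w * e1 - θ 1 v * e2
  have hθne : θ 0 ≠ θ 1 := hdist.ne (by decide)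
  obtain ⟨w0, hw0⟩ := Function.ne_iff.mp hθne
  have hu0 : θ 0 w0 - θ 1 w0 ≠ 0 := sub_ne_zero.2 hw0
  have hφw0 : δ0 0 w0 = 0 := by
    have h1 := hS w0 w0
    have h2 : δ0 0 w0 * (θ 0 w0 - θ 1 w0) = 0 := by linarith
    exact (mul_eq_zero.mp h2).resolve_right hu0
  have hφ : ∀ v, δ0 0 v = 0 := by
    intro v
    have h1 := hS v w0
    rw [hφw0] at h1
    have h2 : δ0 0 v * (θ 0 w0 - θ 1 w0) = 0 := by linarith
    exact (mul_eq_zero.mp h2).resolve_right hu0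
  have hzero' : norm1 δ0 = 0 := by
    rw [norm1]
    apply Finset.sum_eq_zero
    intro k _
    apply Finset.sum_eq_zero
    intro ℓ _
    have hkl : δ0 k ℓ = 0 := by
      have h01 : δ0 1 ℓ = 0 := by rw [hd1 ℓ, hφ ℓ]; ring
      fin_cases k
      · exact hφ ℓ
      · exact h01
    rw [hkl, abs_zero]
  rw [hδ0n] at hzero'
  norm_num at hzero'


end Lemma3Aux


/-- **Lemma 3 (first-order identifiability with two words per document).**
If `m = 2` and the topic vectors are pairwise distinct, then `𝔡_{2,1}(θ) = 0` if and only if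
`K ≥ 3`. -/
theorem degen_two_one_eq_zero_iff
    {V K : ℕ} (hV : 2 ≤ V) (hK : 2 ≤ K) {c0 : ℝ} (hc0 : 0 < c0)
    (ν0 : Measure (Fin K → ℝ)) (hν0 : NiceMixing K ν0)
    (θ : Fin K → Fin V → ℝ) (hθ : θ ∈ Theta c0 V K)
    (hdist : Function.Injective θ) :
    degen ν0 2 θ 1 = 0 ↔ 3 ≤ K := by
  constructor
  · intro h0
    by_contra h3
    have hK2 : K = 2 := by omega
    subst hK2
    exact degen_ne_zero_K2 hV hc0 hν0 hθ hdist h0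
  · intro h3
    exact degen_zero_of_K3 hc0 h3 hν0 hθ hdist

end TopicModel
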